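/- Let Ω be a symmetric nonnegative integer n×n matrix with zero diagonal and let Γ(Ω) be the monoid generated by Q_i = I + D_iΩ. Then no element M ∈ Γ(Ω) has a complex eigenvalue μ with |μ| = 1 other than μ = 1. -/

import Mathlib

open Matrix

theorem stmt6 {n : ℕ} (Ω : Matrix (Fin n) (Fin n) ℤ) (hsymm : Ωᵀ = Ω)
    (hnn : ∀ i j, 0 ≤ Ω i j) (hdiag : ∀ i, Ω i i = 0)
    (M : Matrix (Fin n) (Fin n) ℝ)
    (hM : M ∈ Submonoid.closure
      (Set.range fun i : Fin n =>
        (1 : Matrix (Fin n) (Fin n) ℝ) + single i i 1 * (Ω.map Int.cast)))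
    (μ : ℂ) (habs : ‖μ‖ = 1)
    (heig : ∃ w : Fin n → ℂ, w ≠ 0 ∧ (M.map Complex.ofReal) *ᵥ w = μ • w) :
    μ = 1 := by
  obtain ⟨w, hw, hMw⟩ := heig
  set Ωc : Matrix (Fin n) (Fin n) ℂ := (Ω.map (Int.cast : ℤ → ℝ)).map Complex.ofReal with hΩc
  have hΩH : Ωcᴴ = Ωc := by
    ext a b
    have := congrFun (congrFun hsymm a) b
    simp only [transpose_apply] at this
    simp [hΩc, conjTranspose_apply, Matrix.map_apply, this]
  -- key induction: for every M' in the monoid, the form v ↦ ⟨v, (M'ᴴΩM' - Ω)v⟩ is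
  -- nonnegative, and vanishing implies M' v = v.
  have key : ∀ M' ∈ Submonoid.closure (Set.range fun i : Fin n =>
        (1 : Matrix (Fin n) (Fin n) ℝ) + single i i 1 * (Ω.map Int.cast)),
      ∀ v : Fin n → ℂ, ∃ r : ℝ, 0 ≤ r ∧
        star v ⬝ᵥ (((M'.map Complex.ofReal)ᴴ * Ωc * (M'.map Complex.ofReal) - Ωc) *ᵥ v) = (r : ℂ) ∧
        (r = 0 → (M'.map Complex.ofReal) *ᵥ v = v) := by
    intro M' hM'
    induction hM' using Submonoid.closure_induction with
    | one =>
      intro v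
      refine ⟨0, le_refl _, ?_, fun _ => ?_⟩
      · simp [Matrix.map_one]
      · simp [Matrix.map_one]
    | mem x hx =>
      obtain ⟨i, rfl⟩ := hx
      intro v
      set E : Matrix (Fin n) (Fin n) ℂ := single i i 1 with hE
      have h2 : (single i i (1:ℝ)).map Complex.ofReal = E := by
        ext a b
        by_cases h : i = a ∧ i = b
        · obtain ⟨rfl, rfl⟩ := h
          simp [hE, Matrix.map_apply]
        · rw [Matrix.map_apply, Matrix.single_apply_of_ne _ _ _ _ _ h, hE,
            Matrix.single_apply_of_ne _ _ _ _ _ h]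
          simp
      have hmap : ((1 : Matrix (Fin n) (Fin n) ℝ)
            + single i i 1 * (Ω.map Int.cast)).map Complex.ofReal
          = 1 + E * Ωc := by
        have hh : ((1 : Matrix (Fin n) (Fin n) ℝ)
              + single i i 1 * (Ω.map Int.cast)).map Complex.ofReal
            = Complex.ofRealHom.mapMatrix
              ((1 : Matrix (Fin n) (Fin n) ℝ) + single i i 1 * (Ω.map Int.cast)) := rfl
        rw [hh, map_add, _root_.map_one, _root_.map_mul]
        congr 1
        congr 1
      have hEH : Eᴴ = E := by
        ext a b
        by_cases h : i = a ∧ i = b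
        · obtain ⟨rfl, rfl⟩ := h
          simp [hE]
        · have h' : ¬(i = b ∧ i = a) := fun hc => h ⟨hc.2, hc.1⟩
          rw [hE, conjTranspose_apply, Matrix.single_apply_of_ne _ _ _ _ _ h',
            Matrix.single_apply_of_ne _ _ _ _ _ h]
          simp
      have hEΩE : E * Ωc * E = 0 := by
        ext a b
        rw [hE]
        by_cases hb : b = i
        · by_cases ha : a = i
          · simp [ha, hb, hΩc, Matrix.map_apply, hdiag]
          · simp [ha, hb]
        · simp [hb]
      have hH : (1 + E * Ωc)ᴴ * Ωc * (1 + E * Ωc) - Ωc = Ωc * E * Ωc + Ωc * E * Ωc := by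
        have expand : (1 + Ωc * E) * Ωc * (1 + E * Ωc) - Ωc
            = Ωc * E * Ωc + Ωc * E * Ωc + Ωc * (E * Ωc * E) * Ωc := by noncomm_ring
        rw [conjTranspose_add, conjTranspose_one, conjTranspose_mul, hEH, hΩH, expand, hEΩE]
        simp
      set u : Fin n → ℂ := Ωc *ᵥ v with hu
      have hEu : E *ᵥ u = Pi.single i (u i) := by
        rw [hE, single_mulVec]
        ext a
        by_cases ha : a = i
        · simp [ha, Function.update_apply, Pi.single_apply]
        · simp [Function.update_apply, Pi.single_apply, ha]
      have hdot : star v ⬝ᵥ ((Ωc * E * Ωc) *ᵥ v) = star u ⬝ᵥ (E *ᵥ u) := by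
        rw [← mulVec_mulVec, ← mulVec_mulVec, dotProduct_mulVec]
        congr 1
        rw [← hΩH, ← star_mulVec, ← hu]
      have hval : star u ⬝ᵥ (E *ᵥ u) = ((Complex.normSq (u i) : ℝ) : ℂ) := by
        rw [hEu]
        simp only [dotProduct, Pi.single_apply]
        rw [Finset.sum_eq_single i]
        · have := Complex.mul_conj (u i)
          simp only [if_pos rfl, Pi.star_apply, Complex.star_def]
          rw [mul_comm]
          exact this
        · intro c _ hc; simp [hc]
        · simp
      refine ⟨2 * Complex.normSq (u i), by have := Complex.normSq_nonneg (u i); linarith,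
        ?_, fun hr => ?_⟩
      · rw [hmap, hH, add_mulVec, dotProduct_add, hdot, hval]
        push_cast
        ring
      · have hui : u i = 0 := by
          have : Complex.normSq (u i) = 0 := by linarith
          exact Complex.normSq_eq_zero.mp this
        rw [hmap, add_mulVec, one_mulVec, ← mulVec_mulVec, ← hu, hEu, hui]
        simp
    | mul a b ha hb pa pb =>
      intro v
      set A := a.map Complex.ofReal with hA
      set B := b.map Complex.ofReal with hB
      have hmapmul : (a * b).map Complex.ofReal = A * B := by
        have := Matrix.map_mul (L := a) (M := b) (f := Complex.ofRealHom)
        exact this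
      obtain ⟨rb, hrb0, hrbeq, hrbfix⟩ := pb v
      obtain ⟨ra, hra0, hraeq, hrafix⟩ := pa (B *ᵥ v)
      have hsplit : star v ⬝ᵥ (((A * B)ᴴ * Ωc * (A * B) - Ωc) *ᵥ v)
          = star (B *ᵥ v) ⬝ᵥ ((Aᴴ * Ωc * A - Ωc) *ᵥ (B *ᵥ v)) + star v ⬝ᵥ ((Bᴴ * Ωc * B - Ωc) *ᵥ v) := by
        have hmat : (A * B)ᴴ * Ωc * (A * B) - Ωc
            = Bᴴ * ((Aᴴ * Ωc * A - Ωc) * B) + (Bᴴ * Ωc * B - Ωc) := by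
          rw [conjTranspose_mul]; noncomm_ring
        rw [hmat, add_mulVec, dotProduct_add, ← mulVec_mulVec, dotProduct_mulVec (star v) Bᴴ,
          ← star_mulVec, mulVec_mulVec]
      refine ⟨ra + rb, by linarith, ?_, fun hr => ?_⟩
      · rw [hmapmul, hsplit, hraeq, hrbeq]; push_cast; ring
      · have h1 : ra = 0 := by linarith
        have h2 : rb = 0 := by linarith
        have hb1 : B *ᵥ v = v := hrbfix h2
        have ha1 : A *ᵥ (B *ᵥ v) = B *ᵥ v := hrafix h1
        rw [hb1] at ha1
        rw [hmapmul, ← mulVec_mulVec, hb1]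
        exact ha1
  obtain ⟨r, hr0, hreq, hrfix⟩ := key M hM w
  have hconj : star μ * μ = 1 := by
    have h := Complex.mul_conj μ
    rw [Complex.normSq_eq_norm_sq, habs] at h
    rw [mul_comm] at h
    simpa [Complex.star_def] using h
  have hquad : star w ⬝ᵥ (((M.map Complex.ofReal)ᴴ * Ωc * (M.map Complex.ofReal) - Ωc) *ᵥ w) = 0 := by
    rw [sub_mulVec, dotProduct_sub]
    have h1 : star w ⬝ᵥ (((M.map Complex.ofReal)ᴴ * Ωc * (M.map Complex.ofReal)) *ᵥ w)
        = star w ⬝ᵥ (Ωc *ᵥ w) := by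
      rw [← mulVec_mulVec, ← mulVec_mulVec, dotProduct_mulVec, ← star_mulVec, hMw,
        star_smul, mulVec_smul, smul_dotProduct, dotProduct_smul, smul_smul, hconj, one_smul]
    rw [h1, sub_self]
  have hr' : r = 0 := by
    have := hreq.symm.trans hquad
    exact_mod_cast this
  have hfix : (M.map Complex.ofReal) *ᵥ w = w := hrfix hr'
  have hsm : μ • w = w := by rw [← hMw, hfix]
  obtain ⟨j, hj⟩ := Function.ne_iff.mp hw
  have hj' : w j ≠ 0 := by simpa using hj
  have h3 : μ * w j = w j := congrFun hsm j
  have h4 : (μ - 1) * w j = 0 := by linear_combination h3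
  rcases mul_eq_zero.mp h4 with h | h
  · exact sub_eq_zero.mp h
  · exact absurd h hj'
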